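/- Let G=(V,E) be a finite undirected graph with nonnegative vertex costs c : V → ℝ_{≥0}. For every point x ∈ P_WD(G) ∩ P_cycle-cover(G), there exists a feedback vertex set F ⊆ V such that Σ_{u∈F} c(u) ≤ 2 · Σ_{u∈V} c(u) x_u. Consequently, the integrality gap of the LP relaxation min{Σ_{u∈V} c_u x_u : x ∈ P_WD(G) ∩ P_cycle-cover(G)} is at most 2. -/

import Mathlib

/- Common definitions for the polyhedral study of FVS / PFDS. -/

open scoped Classical
open Finset

namespace FVS

noncomputable section

variable {V : Type*}

/-- Degree of `u` in the subgraph of `G` induced on the vertex set `S`. -/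
def degIn [Fintype V] (G : SimpleGraph V) (S : Finset V) (u : V) : ℕ :=
  (S.filter fun v => G.Adj u v).card

/-- Number of edges of `G` with both endpoints in `S`, i.e. `|E[S]|`. -/
def edgesIn [Fintype V] (G : SimpleGraph V) (S : Finset V) : ℕ :=
  (G.edgeFinset.filter fun e => ∀ v ∈ e, v ∈ S).card

/-- A finite graph is a pseudoforest if each connected component has at most as many
edges as vertices. -/
def IsPseudoforest {W : Type*} [Fintype W] (H : SimpleGraph W) : Prop :=
  ∀ C : H.ConnectedComponent,
    (H.edgeFinset.filter fun e => ∀ v ∈ e, H.connectedComponentMk v = C).card ≤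
      (Finset.univ.filter fun v => H.connectedComponentMk v = C).card

/-- `U` is a pseudoforest deletion set for `G`: `G - U` is a pseudoforest. -/
def IsPFDS [Fintype V] (G : SimpleGraph V) (U : Finset V) : Prop :=
  IsPseudoforest (G.induce {v : V | v ∉ U})

/-- `F` is a feedback vertex set for `G`: `G - F` is acyclic. -/
def IsFVS [Fintype V] (G : SimpleGraph V) (F : Finset V) : Prop :=
  (G.induce {v : V | v ∉ F}).IsAcyclic

/-- Membership in the orientation polyhedron `P_orient(G)`: for every edge `e = uv`,
`x_u + x_v + y_{e,u} + y_{e,v} ≥ 1`; for every vertex `u`,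
`x_u + Σ_{e ∈ δ(u)} y_{e,u} ≤ 1`; and all variables are nonnegative.  The variables
`y e u` for pairs `(e, u)` where `e` is not an edge of `G` or `u` is not an endpoint
of `e` do not occur in the formulation and are pinned to `0`. -/
def POrient [Fintype V] (G : SimpleGraph V) (x : V → ℝ) (y : Sym2 V → V → ℝ) : Prop :=
  (∀ u v, G.Adj u v → 1 ≤ x u + x v + y s(u, v) u + y s(u, v) v) ∧
  (∀ u, x u + ∑ e ∈ G.edgeFinset.filter (fun e => u ∈ e), y e u ≤ 1) ∧
  (∀ u, 0 ≤ x u) ∧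
  (∀ e u, 0 ≤ y e u) ∧
  (∀ e u, ¬ (e ∈ G.edgeSet ∧ u ∈ e) → y e u = 0)

/-- Membership in `Q_orient(G)`, the projection of `P_orient(G)` to the `x`-variables. -/
def QOrient [Fintype V] (G : SimpleGraph V) (x : V → ℝ) : Prop :=
  ∃ y : Sym2 V → V → ℝ, POrient G x y

/-- Membership in the weak density polyhedron `P_WD(G)`:
`x ≥ 0` and `Σ_{u ∈ S} (d_S(u) - 1) x_u ≥ |E[S]| - |S|` for every `S ⊆ V`. -/
def PWD [Fintype V] (G : SimpleGraph V) (x : V → ℝ) : Prop :=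
  (∀ u, 0 ≤ x u) ∧
  ∀ S : Finset V, (edgesIn G S : ℝ) - S.card ≤ ∑ u ∈ S, ((degIn G S u : ℝ) - 1) * x u

/-- Membership in the strong density polyhedron `P_SD(G)`:
`x ≥ 0` and `Σ_{u ∈ S} (d_S(u) - 1) x_u ≥ |E[S]| - |S| + 1` whenever `E[S] ≠ ∅`. -/
def PSD [Fintype V] (G : SimpleGraph V) (x : V → ℝ) : Prop :=
  (∀ u, 0 ≤ x u) ∧
  ∀ S : Finset V, edgesIn G S ≠ 0 →
    (edgesIn G S : ℝ) - S.card + 1 ≤ ∑ u ∈ S, ((degIn G S u : ℝ) - 1) * x u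

/-- The induced subgraph `G[U]` is a cycle: it is connected and `2`-regular. -/
def IsInducedCycle [Fintype V] (G : SimpleGraph V) (U : Finset V) : Prop :=
  (G.induce (U : Set V)).Connected ∧ ∀ u ∈ U, degIn G U u = 2

/-- Membership in the cycle cover polyhedron `P_cycle-cover(G)`. -/
def PCycleCover [Fintype V] (G : SimpleGraph V) (x : V → ℝ) : Prop :=
  (∀ u, 0 ≤ x u) ∧ ∀ U : Finset V, IsInducedCycle G U → 1 ≤ ∑ u ∈ U, x u

/-- The induced subgraph `G[U]` is a `2`-pseudotree: connected with at least `|U| + 1` edges. -/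
def Is2PseudotreeInduced [Fintype V] (G : SimpleGraph V) (U : Finset V) : Prop :=
  (G.induce (U : Set V)).Connected ∧ U.card + 1 ≤ edgesIn G U

/-- Membership in the `2`-pseudotree cover polyhedron `P_2PT-cover(G)`. -/
def P2PTCover [Fintype V] (G : SimpleGraph V) (x : V → ℝ) : Prop :=
  (∀ u, 0 ≤ x u) ∧ ∀ U : Finset V, Is2PseudotreeInduced G U → 1 ≤ ∑ u ∈ U, x u

/-- `(x, y)` is an extreme point of `P_orient(G)`: it is feasible and is not a proper
convex combination of two distinct points of `P_orient(G)`. -/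
def POrientExtreme [Fintype V] (G : SimpleGraph V) (x : V → ℝ) (y : Sym2 V → V → ℝ) : Prop :=
  POrient G x y ∧
    ∀ (x₁ x₂ : V → ℝ) (y₁ y₂ : Sym2 V → V → ℝ) (t : ℝ),
      POrient G x₁ y₁ → POrient G x₂ y₂ → 0 < t → t < 1 →
      (∀ v, x v = t * x₁ v + (1 - t) * x₂ v) →
      (∀ e u, y e u = t * y₁ e u + (1 - t) * y₂ e u) →
      x₁ = x₂ ∧ y₁ = y₂

/-- `(x, y)` is a minimal point of `P_orient(G)`: decreasing any single coordinate by
any `ε > 0`, keeping the other coordinates unchanged, yields a point outside the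
polyhedron. -/
def POrientMinimal [Fintype V] (G : SimpleGraph V) (x : V → ℝ) (y : Sym2 V → V → ℝ) : Prop :=
  (∀ v, ∀ ε : ℝ, 0 < ε → ¬ POrient G (Function.update x v (x v - ε)) y) ∧
  (∀ e u, ∀ ε : ℝ, 0 < ε →
    ¬ POrient G x (fun e' u' => if e' = e ∧ u' = u then y e u - ε else y e' u'))

/-- `x` is an extreme point of `P_WD(G)`: it is feasible and is not a proper convex
combination of two distinct points of `P_WD(G)`. -/
def PWDExtreme [Fintype V] (G : SimpleGraph V) (x : V → ℝ) : Prop :=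
  PWD G x ∧
    ∀ (x₁ x₂ : V → ℝ) (t : ℝ), PWD G x₁ → PWD G x₂ → 0 < t → t < 1 →
      (∀ v, x v = t * x₁ v + (1 - t) * x₂ v) → x₁ = x₂

/-- The support graph `H(y)`: the bipartite graph on `V(G) ⊕ E(G)` joining a vertex `v`
to an edge `e` whenever `v` is an endpoint of the edge `e` of `G` and `y e v > 0`. -/
def supportGraph [Fintype V] (G : SimpleGraph V) (y : Sym2 V → V → ℝ) :
    SimpleGraph (V ⊕ Sym2 V) :=
  SimpleGraph.fromRel fun a b =>
    ∃ v e, a = Sum.inl v ∧ b = Sum.inr e ∧ e ∈ G.edgeSet ∧ v ∈ e ∧ 0 < y e v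

/-- The edge `e` lies on some cycle of `G`. -/
def OnCycle (G : SimpleGraph V) (e : Sym2 V) : Prop :=
  ∃ (u : V) (w : G.Walk u u), w.IsCycle ∧ e ∈ w.edges

/-- `G` has a semi-disjoint cycle: a cycle containing at most one vertex whose degree
in `G` is strictly larger than `2`. -/
def HasSemiDisjointCycle [Fintype V] (G : SimpleGraph V) : Prop :=
  ∃ (u : V) (w : G.Walk u u), w.IsCycle ∧
    (w.support.toFinset.filter fun v => 2 < G.degree v).card ≤ 1

/-- The set `δ(F, V - F)` of edges of `G` with exactly one endpoint in `F`. -/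
def cutEdges [Fintype V] (G : SimpleGraph V) (F : Finset V) : Finset (Sym2 V) :=
  G.edgeFinset.filter fun e => ∃ u v, e = s(u, v) ∧ u ∈ F ∧ v ∉ F

/-- The function `f_x(S) = |E[S]| - |S| - Σ_{u ∈ S} (d_S(u) - 1) x_u`. -/
def fWD [Fintype V] (G : SimpleGraph V) (x : V → ℝ) (S : Finset V) : ℝ :=
  (edgesIn G S : ℝ) - S.card - ∑ u ∈ S, ((degIn G S u : ℝ) - 1) * x u

/-- The row vector `row(S)` of the weak density constraint for the set `S`:
its coordinate at `u` is `d_S(u) - 1` if `u ∈ S` and `0` otherwise. -/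
def rowWD [Fintype V] (G : SimpleGraph V) (S : Finset V) (u : V) : ℝ :=
  if u ∈ S then (degIn G S u : ℝ) - 1 else 0

/-- The constraints (orientation), (load), (cumulative) and nonnegativity of the
purely orientation-based ILP formulation for FVS, with one copy `y f` of the
orientation variables for each edge `f` of `G`:
* `x_v + x_w + y^f_{e,v} + y^f_{e,w} ≥ 1` for all edges `e = vw` and all `f ∈ E`;
* `x_v + Σ_{e = vw ∈ E} y^f_{e,w} ≥ 1` for all `v ∈ V` and all `f ∈ E`;
* `Σ_{v ∈ V - {a,b}} x_v + Σ_{e = vw ∈ E - {f}} (y^f_{e,w} + y^f_{e,v}) ≤ |V| - 2`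
  for all `f = ab ∈ E`; and all variables nonnegative. -/
def OrientSD [Fintype V] (G : SimpleGraph V) (x : V → ℝ)
    (y : Sym2 V → Sym2 V → V → ℝ) : Prop :=
  (∀ f ∈ G.edgeSet, ∀ v w, G.Adj v w →
    1 ≤ x v + x w + y f s(v, w) v + y f s(v, w) w) ∧
  (∀ f ∈ G.edgeSet, ∀ v : V, 1 ≤ x v + ∑ w ∈ G.neighborFinset v, y f s(v, w) w) ∧
  (∀ a b : V, G.Adj a b →
    (∑ v ∈ Finset.univ \ {a, b}, x v) +
      (∑ e ∈ G.edgeFinset.erase s(a, b),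
        ∑ u ∈ Finset.univ.filter (fun u => u ∈ e), y s(a, b) e u)
      ≤ (Fintype.card V : ℝ) - 2) ∧
  (∀ u, 0 ≤ x u) ∧ (∀ f e u, 0 ≤ y f e u)

end
end FVS

namespace FVS


noncomputable section
open SimpleGraph
variable {V : Type*}

/-- Restriction of `G` to the vertex set `R`, as a graph on the ambient type. -/
def res (G : SimpleGraph V) (R : Finset V) : SimpleGraph V where
  Adj u v := G.Adj u v ∧ u ∈ R ∧ v ∈ R
  symm := ⟨fun u v ⟨h, hu, hv⟩ => ⟨h.symm, hv, hu⟩⟩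
  loopless := ⟨fun u ⟨h, _, _⟩ => G.loopless.irrefl u h⟩

lemma res_adj {G : SimpleGraph V} {R : Finset V} {u v : V} :
    (res G R).Adj u v ↔ G.Adj u v ∧ u ∈ R ∧ v ∈ R := Iff.rfl

lemma res_le (G : SimpleGraph V) (R : Finset V) : res G R ≤ G := fun _ _ h => h.1

lemma res_mono (G : SimpleGraph V) {R R' : Finset V} (h : R ⊆ R') : res G R ≤ res G R' :=
  fun _ _ ⟨ha, hu, hv⟩ => ⟨ha, h hu, h hv⟩

/-- `G` restricted to `R` is acyclic. -/
def AcyclicOn (G : SimpleGraph V) (R : Finset V) : Prop := (res G R).IsAcyclic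

lemma res_walk_support {G : SimpleGraph V} {R : Finset V} {a b : V}
    (w : (res G R).Walk a b) (ha : a ∈ R) : ∀ z ∈ w.support, z ∈ R := by
  induction w with
  | nil => intro z hz; rw [SimpleGraph.Walk.support_nil, List.mem_singleton] at hz; rwa [hz]
  | cons h p ih =>
    intro z hz
    rw [SimpleGraph.Walk.support_cons, List.mem_cons] at hz
    rcases hz with rfl | hz
    · exact ha
    · exact ih h.2.2 z hz

lemma cycle_support_subset {G : SimpleGraph V} {R : Finset V} {a : V}
    {w : (res G R).Walk a a} (hw : w.IsCycle) : ∀ z ∈ w.support, z ∈ R := by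
  cases w with
  | nil => exact absurd hw SimpleGraph.Walk.IsCycle.not_of_nil
  | cons h p => exact res_walk_support _ h.2.1

lemma acyclicOn_anti {G : SimpleGraph V} {R R' : Finset V} (h : R ⊆ R') :
    AcyclicOn G R' → AcyclicOn G R := by
  intro hacy v c hc
  exact hacy (c.mapLe (res_mono G h)) (hc.mapLe _)

lemma acyclicOn_empty (G : SimpleGraph V) : AcyclicOn G ∅ := by
  intro v c hc
  have := cycle_support_subset hc v c.start_mem_support
  simp at this

/-- Transfer an edge of a walk in `res G A` into `res G B`, knowing the support lies in `B`. -/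
lemma resTransfer {G : SimpleGraph V} {A B : Finset V} {a b : V}
    (w : (res G A).Walk a b) (hsup : ∀ z ∈ w.support, z ∈ B) :
    ∀ e ∈ w.edges, e ∈ (res G B).edgeSet := by
  intro e he
  induction e using Sym2.ind with
  | _ x y =>
    have hadj : (res G A).Adj x y := w.adj_of_mem_edges he
    exact ⟨hadj.1, hsup x (w.fst_mem_support_of_mem_edges he),
      hsup y (w.snd_mem_support_of_mem_edges he)⟩



/-- In a cycle based at `z`, the vertex `z` has exactly two neighbors along the cycle. -/
lemma cycle_nbrs_exact_base {H : SimpleGraph V} {z : V} (K : H.Walk z z) (hK : K.IsCycle) :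
    ∃ a b, a ≠ b ∧ s(z, a) ∈ K.edges ∧ s(z, b) ∈ K.edges ∧
      ∀ c, s(z, c) ∈ K.edges → c = a ∨ c = b := by
  cases K with
  | nil => exact absurd hK Walk.IsCycle.not_of_nil
  | @cons _ y _ h q =>
    rw [Walk.cons_isCycle_iff] at hK
    obtain ⟨hq, hne⟩ := hK
    -- the reverse of q is a path from z to y
    have hyz : y ≠ z := (H.ne_of_adj h).symm
    have hqr : q.reverse.IsPath := hq.reverse
    cases hr : q.reverse with
    | nil =>
      exfalso; apply hyz
      have hlen : q.length = 0 := by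
        have := congrArg Walk.length hr
        simpa [Walk.length_reverse] using this
      exact Walk.eq_of_length_eq_zero hlen
    | @cons _ b _ h2 r2 =>
      refine ⟨y, b, ?_, ?_, ?_, ?_⟩
      · rintro rfl
        apply hne
        have : s(z, y) ∈ q.reverse.edges := by rw [hr]; simp [Walk.edges_cons]
        rwa [Walk.edges_reverse, List.mem_reverse] at this
      · simp [Walk.edges_cons]
      · have : s(z, b) ∈ q.reverse.edges := by rw [hr]; simp [Walk.edges_cons]
        rw [Walk.edges_reverse, List.mem_reverse] at this
        simp [Walk.edges_cons, this]
      · intro c hc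
        rw [Walk.edges_cons, List.mem_cons] at hc
        rcases hc with hc | hc
        · left; exact (Sym2.congr_right.mp hc.symm).symm
        · right
          have hc' : s(z, c) ∈ q.reverse.edges := by
            rw [Walk.edges_reverse, List.mem_reverse]; exact hc
          rw [hr, Walk.edges_cons, List.mem_cons] at hc'
          rcases hc' with hc' | hc'
          · exact Sym2.congr_right.mp hc'
          · exfalso
            have hzr2 : z ∈ r2.support := r2.fst_mem_support_of_mem_edges hc'
            have : q.reverse.support.Nodup := hqr.support_nodup
            rw [hr, Walk.support_cons] at this
            exact (List.nodup_cons.mp this).1 hzr2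

/-- A vertex on a cycle has exactly two neighbors along the cycle. -/
lemma cycle_nbrs_exact {H : SimpleGraph V} [DecidableEq V] {u z : V} (K : H.Walk u u)
    (hK : K.IsCycle) (hz : z ∈ K.support) :
    ∃ a b, a ≠ b ∧ s(z, a) ∈ K.edges ∧ s(z, b) ∈ K.edges ∧
      ∀ c, s(z, c) ∈ K.edges → c = a ∨ c = b := by
  have hrot := hK.rotate hz
  have hedges : ∀ e, e ∈ (K.rotate z hz).edges ↔ e ∈ K.edges := fun e =>
    (K.rotate_edges z hz).perm.mem_iff
  obtain ⟨a, b, hab, ha, hb, huniq⟩ := cycle_nbrs_exact_base (K.rotate z hz) hrot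
  exact ⟨a, b, hab, (hedges _).mp ha, (hedges _).mp hb, fun c hc => huniq c ((hedges _).mpr hc)⟩

/-- In a cycle in `res G A`, with `A ⊆ R`, a vertex `z` of degree 2 inside `R` has all of its
`R`-neighbors among the cycle edges. -/
lemma nbr_edges {G : SimpleGraph V} [Fintype V] {A R : Finset V} (hAR : A ⊆ R) {u z : V}
    {K : (res G A).Walk u u} (hK : K.IsCycle) (hz : z ∈ K.support)
    (hdeg : (R.filter fun v => G.Adj z v).card = 2) :
    ∀ y, G.Adj z y → y ∈ R → s(z, y) ∈ K.edges := by
  classical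
  obtain ⟨a, b, hab, ha, hb, _⟩ := cycle_nbrs_exact K hK hz
  have hadj : ∀ c, s(z, c) ∈ K.edges → G.Adj z c ∧ c ∈ R := by
    intro c hc
    have := K.adj_of_mem_edges hc
    exact ⟨this.1, hAR this.2.2⟩
  have hsub : ({a, b} : Finset V) ⊆ R.filter fun v => G.Adj z v := by
    intro c hc
    rw [Finset.mem_insert, Finset.mem_singleton] at hc
    rcases hc with rfl | rfl
    · exact Finset.mem_filter.mpr ⟨(hadj c ha).2, (hadj c ha).1⟩
    · exact Finset.mem_filter.mpr ⟨(hadj c hb).2, (hadj c hb).1⟩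
  have hcard : ({a, b} : Finset V).card = 2 := Finset.card_pair hab
  have heq : ({a, b} : Finset V) = R.filter fun v => G.Adj z v :=
    Finset.eq_of_subset_of_card_le hsub (le_of_eq (hdeg.trans hcard.symm))
  intro y hy hyR
  have : y ∈ ({a, b} : Finset V) := heq ▸ Finset.mem_filter.mpr ⟨hyR, hy⟩
  rw [Finset.mem_insert, Finset.mem_singleton] at this
  rcases this with rfl | rfl
  · exact ha
  · exact hb

-- ======== section 3 ========

/-- If `z ≠ t` lies on a path `q` ending at `t`, the prefix of `q` up to `z` avoids `t`. -/
lemma takeUntil_avoid {H : SimpleGraph V} [DecidableEq V] {y t z : V} (q : H.Walk y t)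
    (hq : q.IsPath) (hz : z ∈ q.support) (hzt : z ≠ t) : t ∉ (q.takeUntil z hz).support := by
  intro ht
  have hspec := q.take_spec hz
  have hnodup : q.support.Nodup := hq.support_nodup
  rw [← hspec, Walk.support_append] at hnodup
  have hdisj := List.disjoint_of_nodup_append hnodup
  have htd : t ∈ (q.dropUntil z hz).support.tail := by
    have hend : t ∈ (q.dropUntil z hz).support := Walk.end_mem_support _
    rw [Walk.support_eq_cons] at hend
    rcases List.mem_cons.mp hend with h | h
    · exact absurd h.symm hzt
    · exact h
  exact hdisj ht htd

/-- From a path in some `res` graph, all of whose non-final support vertices lie in `A`,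
every non-final support vertex is reachable from the start inside `res G A`. -/
lemma reach_in_res {G : SimpleGraph V} [DecidableEq V] {RR A : Finset V} {y t : V}
    (q : (res G RR).Walk y t) (hq : q.IsPath) (hA : ∀ z ∈ q.support, z ≠ t → z ∈ A) :
    ∀ z ∈ q.support, z ≠ t → (res G A).Reachable y z := by
  intro z hz hzt
  have havoid := takeUntil_avoid q hq hz hzt
  have hsup : ∀ w ∈ (q.takeUntil z hz).support, w ∈ A := by
    intro w hw
    refine hA w (q.support_takeUntil_subset hz hw) ?_
    rintro rfl; exact havoid hw
  exact ⟨((q.takeUntil z hz).transfer (res G A) (resTransfer _ hsup))⟩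

/-- Propagate a predicate that is closed under adjacency along reachability. -/
lemma reach_closure {H : SimpleGraph V} {P : V → Prop}
    (hcl : ∀ a b, H.Adj a b → P a → P b) {u v : V} (h : H.Reachable u v) (hu : P u) : P v := by
  obtain ⟨w⟩ := h
  induction w with
  | nil => exact hu
  | cons ha p ih => exact ih (hcl _ _ ha hu)

/-- The end vertex of a nonnil closed walk lies in the tail of its support. -/
lemma end_mem_tail {H : SimpleGraph V} {w : V} (d : H.Walk w w) (hd : ¬ d.Nil) :
    w ∈ d.support.tail := by
  cases d with
  | nil => simp at hd
  | cons h q => rw [Walk.support_cons]; exact q.end_mem_support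

lemma mem_support_closed_iff {H : SimpleGraph V} {w z : V} (d : H.Walk w w) (hd : ¬ d.Nil) :
    z ∈ d.support ↔ z ∈ d.support.tail := by
  constructor
  · intro hx
    rw [Walk.support_eq_cons] at hx
    rcases List.mem_cons.mp hx with rfl | hx
    · exact end_mem_tail d hd
    · exact hx
  · intro hx
    rw [Walk.support_eq_cons]
    exact List.mem_cons.mpr (Or.inr hx)

/-- Membership in the support of a rotated cycle. -/
lemma mem_support_rotate {H : SimpleGraph V} [DecidableEq V] {u v z : V} {c : H.Walk v v}
    (hc : c.IsCycle) (h : u ∈ c.support) : z ∈ (c.rotate u h).support ↔ z ∈ c.support := by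
  have hrot := c.support_rotate u h
  have hnilrot : ¬ (c.rotate u h).Nil := (hc.rotate h).not_nil
  rw [mem_support_closed_iff _ hnilrot, mem_support_closed_iff _ hc.not_nil]
  exact hrot.mem_iff


-- ======== section 4 ========
variable [Fintype V]

lemma degIn_mono (G : SimpleGraph V) {S T : Finset V} (h : S ⊆ T) (u : V) :
    degIn G S u ≤ degIn G T u :=
  Finset.card_le_card (Finset.filter_subset_filter _ h)

/-- The edge set of `res G S` corresponds to `E[S]`. -/
lemma edgeFinset_res (G : SimpleGraph V) (S : Finset V) :
    (res G S).edgeFinset = G.edgeFinset.filter fun e => ∀ v ∈ e, v ∈ S := by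
  ext e
  induction e using Sym2.ind with
  | _ x y =>
    simp only [mem_edgeFinset, Finset.mem_filter, mem_edgeSet, Sym2.mem_iff]
    constructor
    · rintro ⟨h, hx, hy⟩
      exact ⟨h, fun v hv => by rcases hv with rfl | rfl <;> assumption⟩
    · rintro ⟨h, hall⟩
      exact ⟨h, hall x (Or.inl rfl), hall y (Or.inr rfl)⟩

lemma degree_res (G : SimpleGraph V) (S : Finset V) (v : V) (hv : v ∈ S) :
    (res G S).degree v = degIn G S v := by
  unfold degIn
  rw [← card_neighborFinset_eq_degree]
  congr 1
  ext a
  simp only [mem_neighborFinset, Finset.mem_filter]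
  constructor
  · rintro ⟨h, _, ha⟩; exact ⟨ha, h⟩
  · rintro ⟨ha, h⟩; exact ⟨h, hv, ha⟩

lemma degree_res_zero (G : SimpleGraph V) (S : Finset V) (v : V) (hv : v ∉ S) :
    (res G S).degree v = 0 := by
  rw [← card_neighborFinset_eq_degree, Finset.card_eq_zero]
  ext a
  simp only [mem_neighborFinset, Finset.notMem_empty, iff_false]
  rintro ⟨_, hv', _⟩
  exact hv hv'

/-- Handshake lemma for induced subgraphs on finsets. -/
lemma handshake (G : SimpleGraph V) (S : Finset V) :
    ∑ v ∈ S, degIn G S v = 2 * edgesIn G S := by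
  have h1 : ∑ v : V, (res G S).degree v = 2 * (res G S).edgeFinset.card :=
    SimpleGraph.sum_degrees_eq_twice_card_edges _
  have h2 : (res G S).edgeFinset.card = edgesIn G S := by rw [edgeFinset_res]; rfl
  have h3 : ∑ v : V, (res G S).degree v = ∑ v ∈ S, degIn G S v := by
    rw [← Finset.sum_subset (Finset.subset_univ S)]
    · exact Finset.sum_congr rfl fun v hv => degree_res G S v hv
    · intro v _ hv; exact degree_res_zero G S v hv
  rw [← h3, h1, h2]

/-- Symmetric double counting of edges between two vertex sets. -/
lemma cross_count (G : SimpleGraph V) (A B : Finset V) :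
    ∑ a ∈ A, (B.filter fun b => G.Adj a b).card = ∑ b ∈ B, (A.filter fun a => G.Adj b a).card := by
  have h : ∀ (X Y : Finset V) (a : V), (Y.filter fun b => G.Adj a b).card =
      ∑ b ∈ Y, if G.Adj a b then 1 else 0 := by
    intro X Y a; rw [Finset.card_filter]
  simp_rw [h A B, h B A]
  rw [Finset.sum_comm]
  apply Finset.sum_congr rfl
  intro b _
  apply Finset.sum_congr rfl
  intro a _
  simp [G.adj_comm a b]

/-- Splitting the degree into `R` over a partition `R = T ∪ F` with `T = R \ F`, `F ⊆ R`. -/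
lemma degIn_split (G : SimpleGraph V) {R F : Finset V} (hF : F ⊆ R) (z : V) :
    degIn G R z = degIn G (R \ F) z + (F.filter fun v => G.Adj z v).card := by
  unfold degIn
  rw [← Finset.card_union_of_disjoint]
  · congr 1
    rw [← Finset.filter_union, Finset.sdiff_union_of_subset hF]
  · exact Finset.disjoint_filter_filter (Finset.sdiff_disjoint)


-- ======== section 5 : trees ========

lemma induce_reachable {G : SimpleGraph V} {A : Finset V} :
    ∀ {a b : V} (w : (res G A).Walk a b) (ha : a ∈ A) (hb : b ∈ A),
    (G.induce (A : Set V)).Reachable ⟨a, ha⟩ ⟨b, hb⟩ := by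
  intro a b w
  induction w with
  | nil => intro _ _; exact Reachable.refl _
  | @cons u v t h p ih =>
    intro ha hb
    have hv : v ∈ A := h.2.2
    have hadj : (G.induce (A : Set V)).Adj ⟨u, ha⟩ ⟨v, hv⟩ := h.1
    exact hadj.reachable.trans (ih hv hb)

lemma card_edges_of_connected_acyclic [Fintype V] {G : SimpleGraph V} (S : Finset V)
    (hne : S.Nonempty)
    (hconn : ∀ a ∈ S, ∀ b ∈ S, (res G S).Reachable a b)
    (hacy : (res G S).IsAcyclic) : S.card = edgesIn G S + 1 := by
  classical
  let φ : G.induce (S : Set V) →g res G S := ⟨Subtype.val, fun {x y} hxy => ⟨hxy, x.2, y.2⟩⟩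
  have hφinj : Function.Injective (φ : _ → V) := fun x y hxy => Subtype.ext hxy
  have htree : (G.induce (S : Set V)).IsTree := by
    constructor
    · rw [connected_iff]
      refine ⟨?_, ⟨⟨hne.choose, hne.choose_spec⟩⟩⟩
      rintro ⟨a, haS⟩ ⟨b, hbS⟩
      exact induce_reachable (Classical.choice (hconn a haS b hbS)) haS hbS
    · intro v c hc
      exact hacy (c.map φ) (hc.map hφinj)
  have hcard := htree.card_edgeFinset
  have hedges : (G.induce (S : Set V)).edgeFinset.card = edgesIn G S := by
    unfold edgesIn
    apply Finset.card_bij (fun e _ => Sym2.map Subtype.val e)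
    · intro e he
      induction e using Sym2.ind with
      | _ x y =>
        rw [mem_edgeFinset] at he
        simp only [Sym2.map_pair_eq, Finset.mem_filter, mem_edgeFinset, mem_edgeSet, Sym2.mem_iff]
        exact ⟨he, fun v hv => by rcases hv with rfl | rfl; exacts [x.2, y.2]⟩
    · intro e1 h1 e2 h2 heq
      exact Sym2.map.injective Subtype.val_injective heq
    · intro f hf
      rw [Finset.mem_filter, mem_edgeFinset] at hf
      induction f using Sym2.ind with
      | _ x y =>
        obtain ⟨hadj2, hmem⟩ := hf
        have hx : x ∈ S := hmem x (Sym2.mem_mk_left x y)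
        have hy : y ∈ S := hmem y (Sym2.mem_mk_right x y)
        refine ⟨s(⟨x, hx⟩, ⟨y, hy⟩), ?_, by simp⟩
        rw [mem_edgeFinset]
        exact hadj2
  rw [← hedges, hcard, ← Fintype.card_coe]
  rfl

-- ======== section 6 : the density bound ========

/-- The minimality witness for `v ∈ F`: data extracted from a cycle through `v` avoiding
`F \ {v}`. -/
lemma witness_mk [Fintype V] {G : SimpleGraph V} {R F : Finset V}
    (hnosdc : ∀ (u : V) (K : (res G R).Walk u u), K.IsCycle →
      ¬ ((K.support.toFinset.filter fun z => 2 < degIn G R z).card ≤ 1))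
    (hFR : F ⊆ R) (hacy : AcyclicOn G (R \ F))
    (hmin : ∀ v ∈ F, ¬ AcyclicOn G (R \ F.erase v)) (v : V) :
    ∃ y : V, v ∈ F → (y ∈ R \ F ∧ G.Adj v y ∧
      (∃ z2, z2 ≠ y ∧ G.Adj v z2 ∧ z2 ∈ R \ F ∧
        (res G (R \ F)).connectedComponentMk z2 = (res G (R \ F)).connectedComponentMk y) ∧
      ((∀ z ∈ R \ F, (res G (R \ F)).connectedComponentMk z =
          (res G (R \ F)).connectedComponentMk y → degIn G R z = 2) → False)) := by
  classical
  by_cases hv : v ∈ F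
  swap
  · exact ⟨v, fun h => absurd h hv⟩
  have hnot := hmin v hv
  have hex : ∃ z0, ∃ K : (res G (R \ F.erase v)).Walk z0 z0, K.IsCycle := by
    by_contra hno
    push_neg at hno
    exact hnot fun z c => hno z c
  obtain ⟨z0, K0, hK0⟩ := hex
  have hsupR' : ∀ z ∈ K0.support, z ∈ R \ F.erase v := cycle_support_subset hK0
  have hR'T : ∀ z, z ∈ R \ F.erase v → z ≠ v → z ∈ R \ F := by
    intro z hz hzv
    rw [Finset.mem_sdiff] at hz ⊢
    exact ⟨hz.1, fun hzF => hz.2 (Finset.mem_erase.mpr ⟨hzv, hzF⟩)⟩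
  have hvK : v ∈ K0.support := by
    by_contra hvK
    have hsub : ∀ z ∈ K0.support, z ∈ R \ F := by
      intro z hz
      exact hR'T z (hsupR' z hz) (fun hzv => hvK (hzv ▸ hz))
    exact hacy (K0.transfer (res G (R \ F)) (resTransfer K0 hsub)) (hK0.transfer _)
  have hK : (K0.rotate v hvK).IsCycle := hK0.rotate hvK
  have hsupK : ∀ z ∈ (K0.rotate v hvK).support, z ∈ R \ F.erase v := by
    intro z hz; exact hsupR' z ((mem_support_rotate hK0 hvK).mp hz)
  obtain ⟨y, h, q, hKeq⟩ := SimpleGraph.Walk.not_nil_iff.mp hK.not_nil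
  have hcys := (SimpleGraph.Walk.cons_isCycle_iff q h).mp (hKeq ▸ hK)
  have hyv : y ≠ v := h.1.ne'
  have hyR' : y ∈ R \ F.erase v := h.2.2
  have hyT : y ∈ R \ F := hR'T y hyR' hyv
  have hsupq : ∀ z ∈ q.support, z ∈ R \ F.erase v := by
    intro z hz
    apply hsupK
    rw [hKeq, SimpleGraph.Walk.support_cons]
    exact List.mem_cons_of_mem _ hz
  have hreach : ∀ z ∈ q.support, z ≠ v → (res G (R \ F)).Reachable y z := by
    apply reach_in_res q hcys.1
    intro z hz hzv
    exact hR'T z (hsupq z hz) hzv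
  -- the second neighbor via the reverse of q
  have hqrnil : ¬ q.reverse.Nil := by
    rw [SimpleGraph.Walk.nil_iff_length_eq, SimpleGraph.Walk.length_reverse]
    intro h0
    exact hyv (SimpleGraph.Walk.eq_of_length_eq_zero h0)
  obtain ⟨b2, h2, q2, hqr⟩ := SimpleGraph.Walk.not_nil_iff.mp hqrnil
  have hedge2 : s(v, b2) ∈ q.edges := by
    have hmem : s(v, b2) ∈ q.reverse.edges := by
      rw [hqr, SimpleGraph.Walk.edges_cons]
      exact List.mem_cons_self
    rwa [SimpleGraph.Walk.edges_reverse, List.mem_reverse] at hmem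
  have hb2y : b2 ≠ y := by
    rintro rfl
    exact hcys.2 hedge2
  have hb2v : b2 ≠ v := h2.1.ne'
  have hb2q : b2 ∈ q.support := q.snd_mem_support_of_mem_edges hedge2
  have hb2T : b2 ∈ R \ F := hR'T b2 (hsupq b2 hb2q) hb2v
  have hmk2 : (res G (R \ F)).connectedComponentMk b2 = (res G (R \ F)).connectedComponentMk y :=
    (SimpleGraph.ConnectedComponent.eq.mpr (hreach b2 hb2q hb2v)).symm
  refine ⟨y, fun _ => ⟨hyT, h.1, ⟨b2, hb2y, h2.1, hb2T, hmk2⟩, ?_⟩⟩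
  intro hall
  have hle : res G (R \ F.erase v) ≤ res G R := res_mono G Finset.sdiff_subset
  have hKR : ((K0.rotate v hvK).mapLe hle).IsCycle := (SimpleGraph.Walk.mapLe_isCycle hle).mpr hK
  apply hnosdc v ((K0.rotate v hvK).mapLe hle) hKR
  have hsupKR : ((K0.rotate v hvK).mapLe hle).support = (K0.rotate v hvK).support := by
    rw [SimpleGraph.Walk.mapLe, SimpleGraph.Walk.support_map]
    exact List.map_id _
  have hsub1 : ((K0.rotate v hvK).mapLe hle).support.toFinset.filter
      (fun z => 2 < degIn G R z) ⊆ {v} := by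
    intro z hzf
    rw [Finset.mem_filter, List.mem_toFinset, hsupKR] at hzf
    obtain ⟨hzK, hdz⟩ := hzf
    rw [Finset.mem_singleton]
    by_contra hzv
    have hzq : z ∈ q.support := by
      rw [hKeq, SimpleGraph.Walk.support_cons] at hzK
      rcases List.mem_cons.mp hzK with rfl | hzq
      · exact absurd rfl hzv
      · exact hzq
    have hzT : z ∈ R \ F := hR'T z (hsupq z hzq) hzv
    have h2z : degIn G R z = 2 :=
      hall z hzT (SimpleGraph.ConnectedComponent.eq.mpr (hreach z hzq hzv)).symm
    omega
  exact le_trans (Finset.card_le_card hsub1) (by simp)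

/-- CGHW density bound: in a clean graph with no semidisjoint cycle, any minimal FVS `F`
satisfies `∑_{v ∈ F} (d(v) - 1) ≤ 2 (|E| - |V|)`. -/
lemma density_fvs_bound [Fintype V] {G : SimpleGraph V} {R F : Finset V}
    (hclean : ∀ v ∈ R, 2 ≤ degIn G R v)
    (hnosdc : ∀ (u : V) (K : (res G R).Walk u u), K.IsCycle →
      ¬ ((K.support.toFinset.filter fun z => 2 < degIn G R z).card ≤ 1))
    (hFR : F ⊆ R) (hacy : AcyclicOn G (R \ F))
    (hmin : ∀ v ∈ F, ¬ AcyclicOn G (R \ F.erase v)) :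
    ∑ v ∈ F, degIn G R v + 2 * R.card ≤ 2 * edgesIn G R + F.card := by
  classical
  have hwit := fun v => witness_mk hnosdc hFR hacy hmin v
  choose yw hyw using hwit
  have hTacy : (res G (R \ F)).IsAcyclic := hacy
  set T := R \ F with hT
  have hTR : T ⊆ R := Finset.sdiff_subset
  set I := T.image (res G T).connectedComponentMk with hI
  have fiber_facts : ∀ j ∈ I,
      (F.filter (fun v => (res G T).connectedComponentMk (yw v) = j)).card +
        2 * (T.filter (fun z => (res G T).connectedComponentMk z = j)).card ≤
      ∑ z ∈ T.filter (fun z => (res G T).connectedComponentMk z = j), degIn G R z := by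
    intro j hj
    set S := T.filter (fun z => (res G T).connectedComponentMk z = j) with hS
    obtain ⟨z0, hz0T, hz0⟩ := Finset.mem_image.mp hj
    have hSne : S.Nonempty := ⟨z0, Finset.mem_filter.mpr ⟨hz0T, hz0⟩⟩
    have hST : S ⊆ T := Finset.filter_subset _ _
    have hconnS : ∀ a ∈ S, ∀ b ∈ S, (res G S).Reachable a b := by
      intro a ha b hb
      rw [hS, Finset.mem_filter] at ha hb
      have hre : (res G T).Reachable a b :=
        SimpleGraph.ConnectedComponent.eq.mp (ha.2.trans hb.2.symm)
      obtain ⟨w⟩ := hre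
      have hsup : ∀ z ∈ w.support, z ∈ S := by
        intro z hz
        have hzT : z ∈ T := res_walk_support w ha.1 z hz
        have hra : (res G T).Reachable a z := ⟨w.takeUntil z hz⟩
        rw [hS, Finset.mem_filter]
        exact ⟨hzT, (SimpleGraph.ConnectedComponent.eq.mpr hra).symm.trans ha.2⟩
      exact ⟨w.transfer _ (resTransfer w hsup)⟩
    have hSacy : (res G S).IsAcyclic := by
      intro u c hc
      exact hTacy (c.mapLe (res_mono G hST)) (hc.mapLe _)
    have hcardS : S.card = edgesIn G S + 1 :=
      card_edges_of_connected_acyclic _ hSne hconnS hSacy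
    have hdegT : ∀ z ∈ S, degIn G T z = degIn G S z := by
      intro z hz
      rw [hS, Finset.mem_filter] at hz
      unfold degIn
      congr 1
      ext a
      simp only [Finset.mem_filter]
      constructor
      · rintro ⟨haT, hadj⟩
        have hadjT : (res G T).Adj z a := ⟨hadj, hz.1, haT⟩
        refine ⟨Finset.mem_filter.mpr ⟨haT, ?_⟩, hadj⟩
        exact (SimpleGraph.ConnectedComponent.eq.mpr hadjT.reachable).symm.trans hz.2
      · rintro ⟨haS, hadj⟩
        exact ⟨hST haS, hadj⟩
    set cj := ∑ vv ∈ F, (S.filter (fun a => G.Adj vv a)).card with hcj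
    have hidA : ∑ z ∈ S, degIn G R z = 2 * edgesIn G S + cj := by
      have h1 : ∀ z ∈ S, degIn G R z = degIn G S z + (F.filter fun w => G.Adj z w).card := by
        intro z hz
        rw [← hdegT z hz, hT]
        exact degIn_split G hFR z
      rw [Finset.sum_congr rfl h1, Finset.sum_add_distrib, handshake]
      congr 1
      rw [hcj]
      exact cross_count G S F
    have hdeg2 : ∀ z ∈ S, 2 ≤ degIn G R z := fun z hz => hclean z (hTR (hST hz))
    have hb1 : 2 * S.card ≤ ∑ z ∈ S, degIn G R z := by
      calc 2 * S.card = ∑ _z ∈ S, 2 := by rw [Finset.sum_const, smul_eq_mul, mul_comm]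
      _ ≤ _ := Finset.sum_le_sum hdeg2
    set Fj := F.filter (fun v => (res G T).connectedComponentMk (yw v) = j) with hFj
    have hb2 : 2 * Fj.card ≤ cj := by
      have hstep : ∀ v ∈ Fj, 2 ≤ (S.filter (fun a => G.Adj v a)).card := by
        intro v hvFj
        rw [hFj, Finset.mem_filter] at hvFj
        obtain ⟨hyT, hadj, ⟨z2, hz2y, hz2adj, hz2T, hz2mk⟩, _⟩ := hyw v hvFj.1
        have hyS : yw v ∈ S.filter (fun a => G.Adj v a) :=
          Finset.mem_filter.mpr ⟨Finset.mem_filter.mpr ⟨hyT, hvFj.2⟩, hadj⟩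
        have hz2S : z2 ∈ S.filter (fun a => G.Adj v a) :=
          Finset.mem_filter.mpr ⟨Finset.mem_filter.mpr ⟨hz2T, hz2mk.trans hvFj.2⟩, hz2adj⟩
        calc 2 = ({z2, yw v} : Finset V).card := (Finset.card_pair hz2y).symm
        _ ≤ _ := Finset.card_le_card (by
            intro a ha
            rcases Finset.mem_insert.mp ha with rfl | ha
            · exact hz2S
            · rw [Finset.mem_singleton] at ha; exact ha ▸ hyS)
      calc 2 * Fj.card = ∑ _v ∈ Fj, 2 := by rw [Finset.sum_const, smul_eq_mul, mul_comm]
      _ ≤ ∑ v ∈ Fj, (S.filter (fun a => G.Adj v a)).card := Finset.sum_le_sum hstep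
      _ ≤ cj := Finset.sum_le_sum_of_subset (Finset.filter_subset _ _)
    have hb3 : Fj.card = 1 → 3 ≤ cj := by
      intro h1
      by_contra hlt
      push_neg at hlt
      have hall2 : ∀ z ∈ S, degIn G R z = 2 := by
        intro z hz
        by_contra hne2
        have hstrict : 2 * S.card < ∑ z ∈ S, degIn G R z := by
          have : ∑ _z ∈ S, 2 < ∑ z ∈ S, degIn G R z :=
            Finset.sum_lt_sum hdeg2 ⟨z, hz, by have := hdeg2 z hz; omega⟩
          calc 2 * S.card = ∑ _z ∈ S, 2 := by rw [Finset.sum_const, smul_eq_mul, mul_comm]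
          _ < _ := this
        omega
      obtain ⟨v, hvFj⟩ := Finset.card_eq_one.mp h1
      have hvF : v ∈ F ∧ (res G T).connectedComponentMk (yw v) = j := by
        have hmem : v ∈ Fj := hvFj ▸ Finset.mem_singleton_self v
        rw [hFj, Finset.mem_filter] at hmem
        exact hmem
      obtain ⟨hyT, hadj, _, hfalse⟩ := hyw v hvF.1
      apply hfalse
      intro z hzT hmkz
      exact hall2 z (Finset.mem_filter.mpr ⟨hzT, hmkz.trans hvF.2⟩)
    have hc2 : 2 ≤ cj := by omega
    have hkey : Fj.card + 2 ≤ cj := by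
      by_cases h1 : Fj.card = 1
      · have := hb3 h1; omega
      · omega
    omega
  have hmapsF : ∀ v ∈ F, (res G T).connectedComponentMk (yw v) ∈ I := by
    intro v hv
    obtain ⟨hyT, _, _, _⟩ := hyw v hv
    exact Finset.mem_image_of_mem _ hyT
  have hmapsT : ∀ z ∈ T, (res G T).connectedComponentMk z ∈ I :=
    fun z hz => Finset.mem_image_of_mem _ hz
  have hsumT : ∑ z ∈ T, degIn G R z =
      ∑ j ∈ I, ∑ z ∈ T.filter (fun z => (res G T).connectedComponentMk z = j), degIn G R z :=
    (Finset.sum_fiberwise_of_maps_to hmapsT _).symm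
  have hcardF : F.card =
      ∑ j ∈ I, (F.filter (fun v => (res G T).connectedComponentMk (yw v) = j)).card :=
    Finset.card_eq_sum_card_fiberwise hmapsF
  have hcardT : T.card =
      ∑ j ∈ I, (T.filter (fun z => (res G T).connectedComponentMk z = j)).card :=
    Finset.card_eq_sum_card_fiberwise hmapsT
  have hstar : F.card + 2 * T.card ≤ ∑ z ∈ T, degIn G R z := by
    rw [hsumT, hcardF, hcardT, Finset.mul_sum, ← Finset.sum_add_distrib]
    exact Finset.sum_le_sum fiber_facts
  have hhand : ∑ v ∈ R, degIn G R v = 2 * edgesIn G R := handshake G R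
  have hsplit : ∑ z ∈ T, degIn G R z + ∑ v ∈ F, degIn G R v = ∑ v ∈ R, degIn G R v := by
    rw [hT]
    exact Finset.sum_sdiff hFR
  have hRcard : T.card + F.card = R.card := by
    rw [hT]
    exact Finset.card_sdiff_add_card_eq_card hFR
  omega

-- ======== section 7 : semidisjoint cycles ========

/-- The support of a semidisjoint cycle induces a cycle in `G`. -/
lemma sdc_induced_cycle [Fintype V] {G : SimpleGraph V} {R : Finset V}
    (hclean : ∀ v ∈ R, 2 ≤ degIn G R v) {u0 : V} (w : (res G R).Walk u0 u0)
    (hw : w.IsCycle)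
    (hsd : (w.support.toFinset.filter fun z => 2 < degIn G R z).card ≤ 1) :
    IsInducedCycle G w.support.toFinset := by
  classical
  set C := w.support.toFinset with hC
  have hCR : C ⊆ R := by
    intro z hz
    exact cycle_support_subset hw z (List.mem_toFinset.mp hz)
  constructor
  · -- connectivity
    have hconn := (w.mapLe (res_le G R)).connected_induce_support
    have hsupeq : (w.mapLe (res_le G R)).support = w.support := by
      rw [SimpleGraph.Walk.mapLe, SimpleGraph.Walk.support_map]
      exact List.map_id _
    have hset : {v : V | v ∈ (w.mapLe (res_le G R)).support} = (C : Set V) := by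
      ext z
      simp only [Set.mem_setOf_eq, Finset.coe_sort_coe, Finset.mem_coe, hC, List.mem_toFinset,
        hsupeq]
    rwa [hset] at hconn
  · -- degrees
    intro u huC
    have huS : u ∈ w.support := List.mem_toFinset.mp huC
    obtain ⟨a, b, hab, ha, hb, huniq⟩ := cycle_nbrs_exact w hw huS
    have haadj := w.adj_of_mem_edges ha
    have hbadj := w.adj_of_mem_edges hb
    have hage : 2 ≤ degIn G C u := by
      have hsub : ({a, b} : Finset V) ⊆ C.filter fun z => G.Adj u z := by
        intro z hz
        rcases Finset.mem_insert.mp hz with rfl | hz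
        · exact Finset.mem_filter.mpr
            ⟨List.mem_toFinset.mpr (w.snd_mem_support_of_mem_edges ha), haadj.1⟩
        · rw [Finset.mem_singleton] at hz
          subst hz
          exact Finset.mem_filter.mpr
            ⟨List.mem_toFinset.mpr (w.snd_mem_support_of_mem_edges hb), hbadj.1⟩
      calc 2 = ({a, b} : Finset V).card := (Finset.card_pair hab).symm
      _ ≤ _ := Finset.card_le_card hsub
    by_cases hdu : degIn G R u = 2
    · have : degIn G C u ≤ degIn G R u := degIn_mono G hCR u
      omega
    · -- u is the exceptional vertex
      have hdu3 : 2 < degIn G R u := by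
        have := hclean u (hCR huC)
        omega
      have hle2 : degIn G C u ≤ 2 := by
        have hsub2 : (C.filter fun z => G.Adj u z) ⊆ ({a, b} : Finset V) := by
          intro z hz
          rw [Finset.mem_filter] at hz
          obtain ⟨hzC, hzadj⟩ := hz
          -- z has degree 2 in R
          have hdz : degIn G R z = 2 := by
            by_contra hdz
            have hz3 : 2 < degIn G R z := by
              have := hclean z (hCR hzC)
              omega
            have h2 : 1 < (C.filter fun z => 2 < degIn G R z).card := by
              apply Finset.one_lt_card.mpr
              exact ⟨u, Finset.mem_filter.mpr ⟨huC, hdu3⟩, z,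
                Finset.mem_filter.mpr ⟨hzC, hz3⟩, hzadj.ne⟩
            omega
          have hedge : s(z, u) ∈ w.edges :=
            nbr_edges (le_refl R : R ⊆ R) hw (List.mem_toFinset.mp hzC) hdz u hzadj.symm (hCR huC)
          have hedge' : s(u, z) ∈ w.edges := by rwa [Sym2.eq_swap] at hedge
          rcases huniq z hedge' with rfl | rfl
          · exact Finset.mem_insert_self _ _
          · exact Finset.mem_insert_of_mem (Finset.mem_singleton_self _)
        calc degIn G C u ≤ ({a, b} : Finset V).card := Finset.card_le_card hsub2
        _ = 2 := Finset.card_pair hab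
      omega

/-- Lemma (a): a minimal FVS meets a semidisjoint cycle in at most 2 vertices. -/
lemma sdc_fvs_bound [Fintype V] {G : SimpleGraph V} {R F : Finset V}
    (hclean : ∀ v ∈ R, 2 ≤ degIn G R v) {u0 : V} {w : (res G R).Walk u0 u0}
    (hw : w.IsCycle)
    (hsd : (w.support.toFinset.filter fun z => 2 < degIn G R z).card ≤ 1)
    (hFR : F ⊆ R) (hacy : AcyclicOn G (R \ F))
    (hmin : ∀ v ∈ F, ¬ AcyclicOn G (R \ F.erase v)) :
    (F ∩ w.support.toFinset).card ≤ 2 := by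
  classical
  set C := w.support.toFinset with hC
  have hCR : C ⊆ R := by
    intro z hz
    exact cycle_support_subset hw z (List.mem_toFinset.mp hz)
  by_contra hgt
  push_neg at hgt
  set Ex := C.filter (fun z => 2 < degIn G R z) with hEx
  have hDcard : 2 ≤ ((F ∩ C) \ Ex).card := by
    have h1 := Finset.card_le_card_sdiff_add_card (s := F ∩ C) (t := Ex)
    omega
  obtain ⟨u1, hu1, u2, hu2, hne12⟩ := Finset.one_lt_card.mp (by omega : 1 < ((F ∩ C) \ Ex).card)
  have hu1F : u1 ∈ F := (Finset.mem_inter.mp (Finset.mem_sdiff.mp hu1).1).1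
  have hu1C : u1 ∈ C := (Finset.mem_inter.mp (Finset.mem_sdiff.mp hu1).1).2
  have hu2F : u2 ∈ F := (Finset.mem_inter.mp (Finset.mem_sdiff.mp hu2).1).1
  have hu2C : u2 ∈ C := (Finset.mem_inter.mp (Finset.mem_sdiff.mp hu2).1).2
  have hbex : ∃ b ∈ C, b ≠ u1 ∧ b ≠ u2 ∧ ∀ z ∈ C, z ≠ b → degIn G R z = 2 := by
    by_cases hExne : Ex.Nonempty
    · obtain ⟨b, hb⟩ := hExne
      have hbC : b ∈ C := (Finset.mem_filter.mp hb).1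
      refine ⟨b, hbC, ?_, ?_, ?_⟩
      · rintro rfl; exact (Finset.mem_sdiff.mp hu1).2 hb
      · rintro rfl; exact (Finset.mem_sdiff.mp hu2).2 hb
      · intro z hzC hzb
        have hzEx : z ∉ Ex := by
          intro hzEx
          have h2 : 1 < Ex.card := Finset.one_lt_card.mpr ⟨z, hzEx, b, hb, hzb⟩
          omega
        have hcl := hclean z (hCR hzC)
        have hnot : ¬ 2 < degIn G R z := fun hlt => hzEx (Finset.mem_filter.mpr ⟨hzC, hlt⟩)
        omega
    · have hpos : 0 < ((F ∩ C) \ {u1, u2}).card := by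
        have h2 : ({u1, u2} : Finset V).card ≤ 2 := Finset.card_insert_le u1 {u2}
        have h3 := Finset.card_le_card_sdiff_add_card (s := F ∩ C) (t := ({u1, u2} : Finset V))
        omega
      obtain ⟨b, hb⟩ := Finset.card_pos.mp hpos
      rw [Finset.mem_sdiff] at hb
      have hbC : b ∈ C := (Finset.mem_inter.mp hb.1).2
      refine ⟨b, hbC, ?_, ?_, ?_⟩
      · rintro rfl; exact hb.2 (Finset.mem_insert_self _ _)
      · rintro rfl; exact hb.2 (Finset.mem_insert_of_mem (Finset.mem_singleton_self _))
      · intro z hzC hzb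
        have hzEx : z ∉ Ex := by
          rw [Finset.not_nonempty_iff_eq_empty] at hExne
          rw [hEx] at hExne ⊢
          rw [hExne]
          exact Finset.notMem_empty z
        have hcl := hclean z (hCR hzC)
        have hnot : ¬ 2 < degIn G R z := fun hlt => hzEx (Finset.mem_filter.mpr ⟨hzC, hlt⟩)
        omega
  obtain ⟨b, hbC, hbu1, hbu2, hdeg2⟩ := hbex
  -- the witness cycle for u1
  have hex : ∃ z0, ∃ K : (res G (R \ F.erase u1)).Walk z0 z0, K.IsCycle := by
    by_contra hno
    push_neg at hno
    exact (hmin u1 hu1F) fun z c => hno z c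
  obtain ⟨z0, K0, hK0⟩ := hex
  have hsupR' : ∀ z ∈ K0.support, z ∈ R \ F.erase u1 := cycle_support_subset hK0
  have hR'T : ∀ z, z ∈ R \ F.erase u1 → z ≠ u1 → z ∈ R \ F := by
    intro z hz hzv
    rw [Finset.mem_sdiff] at hz ⊢
    exact ⟨hz.1, fun hzF => hz.2 (Finset.mem_erase.mpr ⟨hzv, hzF⟩)⟩
  have hu1K : u1 ∈ K0.support := by
    by_contra hvK
    have hsub : ∀ z ∈ K0.support, z ∈ R \ F := by
      intro z hz
      exact hR'T z (hsupR' z hz) (fun hzv => hvK (hzv ▸ hz))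
    exact hacy (K0.transfer (res G (R \ F)) (resTransfer K0 hsub)) (hK0.transfer _)
  -- rotate w at b and build reachability within C.erase b
  have hbw : b ∈ w.support := List.mem_toFinset.mp hbC
  have hwb : (w.rotate b hbw).IsCycle := hw.rotate hbw
  obtain ⟨y, h, q, hKeq⟩ := SimpleGraph.Walk.not_nil_iff.mp hwb.not_nil
  have hcys := (SimpleGraph.Walk.cons_isCycle_iff q h).mp (hKeq ▸ hwb)
  have hqsub : ∀ z ∈ q.support, z ∈ C := by
    intro z hz
    have hzr : z ∈ (w.rotate b hbw).support := by
      rw [hKeq, SimpleGraph.Walk.support_cons]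
      exact List.mem_cons_of_mem _ hz
    exact List.mem_toFinset.mpr ((mem_support_rotate hw hbw).mp hzr)
  have hreach : ∀ z ∈ q.support, z ≠ b → (res G (C.erase b)).Reachable y z := by
    apply reach_in_res q hcys.1
    intro z hz hzb
    exact Finset.mem_erase.mpr ⟨hzb, hqsub z hz⟩
  have hy_u : ∀ uu, uu ∈ C → uu ≠ b → (res G (C.erase b)).Reachable y uu := by
    intro uu huuC huub
    have hmemr : uu ∈ (w.rotate b hbw).support :=
      (mem_support_rotate hw hbw).mpr (List.mem_toFinset.mp huuC)
    rw [hKeq, SimpleGraph.Walk.support_cons] at hmemr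
    rcases List.mem_cons.mp hmemr with rfl | h2
    · exact absurd rfl huub
    · exact hreach uu h2 huub
  have hreach12 : (res G (C.erase b)).Reachable u1 u2 :=
    (hy_u u1 hu1C (Ne.symm hbu1)).symm.trans (hy_u u2 hu2C (Ne.symm hbu2))
  -- closure along reachability
  have hclosure : ∀ a bb, (res G (C.erase b)).Adj a bb → a ∈ K0.support → bb ∈ K0.support := by
    intro a bb hadj haK
    have haC : a ∈ C.erase b := hadj.2.1
    have hbbC : bb ∈ C.erase b := hadj.2.2
    have hda : degIn G R a = 2 :=
      hdeg2 a (Finset.mem_erase.mp haC).2 (Finset.mem_erase.mp haC).1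
    have hedge : s(a, bb) ∈ K0.edges :=
      nbr_edges Finset.sdiff_subset hK0 haK hda bb hadj.1 (hCR (Finset.mem_erase.mp hbbC).2)
    exact K0.snd_mem_support_of_mem_edges hedge
  have hu2K : u2 ∈ K0.support := reach_closure hclosure hreach12 hu1K
  have hfin := hsupR' u2 hu2K
  rw [Finset.mem_sdiff] at hfin
  exact hfin.2 (Finset.mem_erase.mpr ⟨Ne.symm hne12, hu2F⟩)

-- ======== section 8 : main induction ========

lemma acyclic_extend [Fintype V] {G : SimpleGraph V} {R : Finset V} {v : V}
    (hdeg : degIn G R v ≤ 1) {B : Finset V} (hBR : B ⊆ R)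
    (hacy : AcyclicOn G (B.erase v)) : AcyclicOn G B := by
  classical
  intro z K hK
  by_cases hvK : v ∈ K.support
  · obtain ⟨a, b, hab, ha, hb, _⟩ := cycle_nbrs_exact K hK hvK
    have haadj := K.adj_of_mem_edges ha
    have hbadj := K.adj_of_mem_edges hb
    have hsub : ({a, b} : Finset V) ⊆ R.filter fun y => G.Adj v y := by
      intro y hy
      rcases Finset.mem_insert.mp hy with rfl | hy
      · exact Finset.mem_filter.mpr ⟨hBR haadj.2.2, haadj.1⟩
      · rw [Finset.mem_singleton] at hy
        subst hy
        exact Finset.mem_filter.mpr ⟨hBR hbadj.2.2, hbadj.1⟩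
    have h2 : 2 ≤ degIn G R v := by
      calc 2 = ({a, b} : Finset V).card := (Finset.card_pair hab).symm
      _ ≤ _ := Finset.card_le_card hsub
    omega
  · have hsub : ∀ z' ∈ K.support, z' ∈ B.erase v := fun z' hz' =>
      Finset.mem_erase.mpr ⟨fun h => hvK (h ▸ hz'), cycle_support_subset hK z' hz'⟩
    exact hacy (K.transfer _ (resTransfer K hsub)) (hK.transfer _)

lemma main_induction [Fintype V] (G : SimpleGraph V) (x : V → ℝ)
    (hx : PWD G x) (hx2 : PCycleCover G x) :
    ∀ (N : ℕ) (R : Finset V) (c : V → ℝ),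
      R.card + (R.filter (fun u => c u ≠ 0)).card ≤ N → (∀ u, 0 ≤ c u) →
      ∃ F : Finset V, F ⊆ R ∧ AcyclicOn G (R \ F) ∧
        (∀ v ∈ F, ¬ AcyclicOn G (R \ F.erase v)) ∧
        ∑ u ∈ F, c u ≤ 2 * ∑ u ∈ R, c u * x u := by
  classical
  intro N
  induction N with
  | zero =>
    intro R c hN hc
    have hR : R = ∅ := Finset.card_eq_zero.mp (by omega)
    subst hR
    exact ⟨∅, Finset.Subset.refl _, by rw [Finset.sdiff_empty]; exact acyclicOn_empty G,
      by simp, by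
        rw [Finset.sum_empty]
        apply mul_nonneg (by norm_num)
        exact Finset.sum_nonneg fun u _ => mul_nonneg (hc u) (hx.1 u)⟩
  | succ n ih =>
    intro R c hN hc
    have hsum_nonneg : ∀ (S : Finset V), (0:ℝ) ≤ ∑ u ∈ S, c u * x u :=
      fun S => Finset.sum_nonneg fun u _ => mul_nonneg (hc u) (hx.1 u)
    by_cases hacyR : AcyclicOn G R
    · exact ⟨∅, Finset.empty_subset R, by rwa [Finset.sdiff_empty], by simp, by
        rw [Finset.sum_empty]
        exact mul_nonneg (by norm_num) (hsum_nonneg R)⟩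
    by_cases hzero : ∃ v ∈ R, c v = 0
    · obtain ⟨v, hvR, hcv⟩ := hzero
      have hmeas : (R.erase v).card + ((R.erase v).filter (fun u => c u ≠ 0)).card ≤ n := by
        have h1 : (R.erase v).card + 1 = R.card := Finset.card_erase_add_one hvR
        have h2 : ((R.erase v).filter (fun u => c u ≠ 0)).card ≤
            (R.filter (fun u => c u ≠ 0)).card :=
          Finset.card_le_card (Finset.filter_subset_filter _ (Finset.erase_subset _ _))
        omega
      obtain ⟨F', hF'sub, hF'acy, hF'min, hF'sum⟩ := ih (R.erase v) c hmeas hc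
      have hvF' : v ∉ F' := fun h => (Finset.mem_erase.mp (hF'sub h)).1 rfl
      have hsum_eq : ∑ u ∈ R, c u * x u = ∑ u ∈ R.erase v, c u * x u := by
        rw [← Finset.add_sum_erase R (fun u => c u * x u) hvR, hcv]
        ring
      by_cases hacy2 : AcyclicOn G (R \ F')
      · refine ⟨F', fun u hu => (Finset.erase_subset v R) (hF'sub hu), hacy2, ?_, ?_⟩
        · intro u huF' hA
          exact hF'min u huF' (acyclicOn_anti
            (Finset.sdiff_subset_sdiff (Finset.erase_subset _ _) (Finset.Subset.refl _)) hA)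
        · rw [hsum_eq]; exact hF'sum
      · refine ⟨insert v F', ?_, ?_, ?_, ?_⟩
        · intro u hu
          rcases Finset.mem_insert.mp hu with rfl | hu
          · exact hvR
          · exact (Finset.erase_subset v R) (hF'sub hu)
        · have hseteq : R \ insert v F' = (R.erase v) \ F' := by
            ext z
            simp only [Finset.mem_sdiff, Finset.mem_erase, Finset.mem_insert, not_or]
            tauto
          rwa [hseteq]
        · intro u hu
          rcases Finset.mem_insert.mp hu with rfl | huF'
          · rw [Finset.erase_insert hvF']; exact hacy2
          · have hne : u ≠ v := fun h => hvF' (h ▸ huF')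
            have hseteq : R \ (insert v F').erase u = (R.erase v) \ F'.erase u := by
              ext z
              simp only [Finset.mem_sdiff, Finset.mem_erase, Finset.mem_insert]
              by_cases hz1 : z = u <;> by_cases hz2 : z = v <;> simp [hz1, hz2, hne] <;> tauto
            intro hA
            exact hF'min u huF' (by rwa [hseteq] at hA)
        · rw [Finset.sum_insert hvF', hcv, zero_add, hsum_eq]
          exact hF'sum
    by_cases hlowdeg : ∃ v ∈ R, degIn G R v ≤ 1
    · obtain ⟨v, hvR, hdv⟩ := hlowdeg
      have hmeas : (R.erase v).card + ((R.erase v).filter (fun u => c u ≠ 0)).card ≤ n := by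
        have h1 : (R.erase v).card + 1 = R.card := Finset.card_erase_add_one hvR
        have h2 : ((R.erase v).filter (fun u => c u ≠ 0)).card ≤
            (R.filter (fun u => c u ≠ 0)).card :=
          Finset.card_le_card (Finset.filter_subset_filter _ (Finset.erase_subset _ _))
        omega
      obtain ⟨F', hF'sub, hF'acy, hF'min, hF'sum⟩ := ih (R.erase v) c hmeas hc
      refine ⟨F', fun u hu => (Finset.erase_subset v R) (hF'sub hu), ?_, ?_, ?_⟩
      · apply acyclic_extend hdv (Finset.sdiff_subset)
        have hseteq : (R \ F').erase v = (R.erase v) \ F' := by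
          ext z
          simp only [Finset.mem_sdiff, Finset.mem_erase]
          tauto
        rwa [hseteq]
      · intro u huF' hA
        exact hF'min u huF' (acyclicOn_anti
          (Finset.sdiff_subset_sdiff (Finset.erase_subset _ _) (Finset.Subset.refl _)) hA)
      · calc ∑ u ∈ F', c u ≤ 2 * ∑ u ∈ R.erase v, c u * x u := hF'sum
        _ ≤ 2 * ∑ u ∈ R, c u * x u := by
            have := Finset.sum_le_sum_of_subset_of_nonneg (Finset.erase_subset v R)
              (fun u _ _ => mul_nonneg (hc u) (hx.1 u))
            linarith
    -- clean case
    push_neg at hzero hlowdeg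
    have hclean : ∀ v ∈ R, 2 ≤ degIn G R v := by
      intro v hv
      have := hlowdeg v hv
      omega
    have hRne : R.Nonempty := by
      rcases Finset.eq_empty_or_nonempty R with rfl | h
      · exact absurd (acyclicOn_empty G) hacyR
      · exact h
    by_cases hsdc : ∃ u, ∃ K : (res G R).Walk u u, K.IsCycle ∧
        (K.support.toFinset.filter fun z => 2 < degIn G R z).card ≤ 1
    · -- semidisjoint cycle case
      obtain ⟨u0, w, hw, hsd⟩ := hsdc
      have hCR : w.support.toFinset ⊆ R := fun z hz =>
        cycle_support_subset hw z (List.mem_toFinset.mp hz)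
      have hCne : w.support.toFinset.Nonempty :=
        ⟨u0, List.mem_toFinset.mpr w.start_mem_support⟩
      have hIC : IsInducedCycle G w.support.toFinset := sdc_induced_cycle hclean w hw hsd
      have hxC : 1 ≤ ∑ u ∈ w.support.toFinset, x u := hx2.2 _ hIC
      obtain ⟨v0, hv0C, hv0min⟩ := Finset.exists_min_image w.support.toFinset c hCne
      have hlam0 : 0 ≤ c v0 := hc v0
      set c' : V → ℝ := fun u => if u ∈ w.support.toFinset then c u - c v0 else c u with hc'def
      have hc' : ∀ u, 0 ≤ c' u := by
        intro u
        rw [hc'def]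
        dsimp only
        split
        · rename_i h
          exact sub_nonneg.mpr (hv0min u h)
        · exact hc u
      have hc'v0 : c' v0 = 0 := by
        rw [hc'def]
        dsimp only
        rw [if_pos hv0C]
        ring
      have hc'le : ∀ u, c' u ≤ c u := by
        intro u
        rw [hc'def]
        dsimp only
        split
        · linarith
        · exact le_refl _
      have hmeas : R.card + (R.filter (fun u => c' u ≠ 0)).card ≤ n := by
        have hsub : R.filter (fun u => c' u ≠ 0) ⊆ (R.filter (fun u => c u ≠ 0)).erase v0 := by
          intro z hzf
          rw [Finset.mem_filter] at hzf
          refine Finset.mem_erase.mpr ⟨?_, Finset.mem_filter.mpr ⟨hzf.1, hzero z hzf.1⟩⟩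
          rintro rfl
          exact hzf.2 hc'v0
        have hv0f : v0 ∈ R.filter (fun u => c u ≠ 0) :=
          Finset.mem_filter.mpr ⟨hCR hv0C, hzero v0 (hCR hv0C)⟩
        have h1 := Finset.card_le_card hsub
        have h2 : ((R.filter (fun u => c u ≠ 0)).erase v0).card + 1 =
            (R.filter (fun u => c u ≠ 0)).card := Finset.card_erase_add_one hv0f
        omega
      obtain ⟨F, hFR, hFacy, hFmin, hFsum⟩ := ih R c' hmeas hc'
      have hFC : (F ∩ w.support.toFinset).card ≤ 2 := sdc_fvs_bound hclean hw hsd hFR hFacy hFmin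
      refine ⟨F, hFR, hFacy, hFmin, ?_⟩
      have hsplitF : ∑ u ∈ F, c u =
          ∑ u ∈ F, c' u + c v0 * ((F ∩ w.support.toFinset).card : ℝ) := by
        have h0 : ∀ u ∈ F, c u = c' u + (if u ∈ w.support.toFinset then c v0 else 0) := by
          intro u _
          rw [hc'def]
          dsimp only
          split <;> ring
        rw [Finset.sum_congr rfl h0, Finset.sum_add_distrib]
        congr 1
        rw [Finset.sum_ite_mem, Finset.sum_const, nsmul_eq_mul]
        ring
      have hsplitR : ∑ u ∈ R, c u * x u =
          ∑ u ∈ R, c' u * x u + c v0 * ∑ u ∈ w.support.toFinset, x u := by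
        have h0 : ∀ u ∈ R, c u * x u =
            c' u * x u + (if u ∈ w.support.toFinset then c v0 * x u else 0) := by
          intro u _
          rw [hc'def]
          dsimp only
          split <;> ring
        rw [Finset.sum_congr rfl h0, Finset.sum_add_distrib]
        congr 1
        rw [Finset.sum_ite_mem, Finset.inter_eq_right.mpr hCR, Finset.mul_sum]
      rw [hsplitF, hsplitR]
      have h1 : c v0 * ((F ∩ w.support.toFinset).card : ℝ) ≤ c v0 * 2 := by
        apply mul_le_mul_of_nonneg_left _ hlam0
        exact_mod_cast hFC
      have h2 : c v0 * 2 ≤ 2 * (c v0 * ∑ u ∈ w.support.toFinset, x u) := by nlinarith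
      linarith
    · -- density case
      have hnosdc : ∀ (u : V) (K : (res G R).Walk u u), K.IsCycle →
          ¬((K.support.toFinset.filter fun z => 2 < degIn G R z).card ≤ 1) := by
        intro u K hK hle
        exact hsdc ⟨u, K, hK, hle⟩
      obtain ⟨v0, hv0R, hv0min⟩ :=
        Finset.exists_min_image R (fun u => c u / ((degIn G R u : ℝ) - 1)) hRne
      have hdpos : ∀ u ∈ R, (0:ℝ) < (degIn G R u : ℝ) - 1 := by
        intro u hu
        have h2 := hclean u hu
        have h2' : (2:ℝ) ≤ (degIn G R u : ℝ) := by exact_mod_cast h2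
        linarith
      have hlam0 : 0 ≤ c v0 / ((degIn G R v0 : ℝ) - 1) :=
        div_nonneg (hc v0) (le_of_lt (hdpos v0 hv0R))
      set lam := c v0 / ((degIn G R v0 : ℝ) - 1) with hlamdef
      set c' : V → ℝ := fun u => if u ∈ R then c u - lam * ((degIn G R u : ℝ) - 1) else c u
        with hc'def
      have hc' : ∀ u, 0 ≤ c' u := by
        intro u
        rw [hc'def]
        dsimp only
        split
        · rename_i hu
          have hle := hv0min u hu
          have := (le_div_iff₀ (hdpos u hu)).mp hle
          linarith
        · exact hc u
      have hc'v0 : c' v0 = 0 := by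
        rw [hc'def]
        dsimp only
        rw [if_pos hv0R, hlamdef, div_mul_cancel₀ _ (ne_of_gt (hdpos v0 hv0R))]
        ring
      have hmeas : R.card + (R.filter (fun u => c' u ≠ 0)).card ≤ n := by
        have hsub : R.filter (fun u => c' u ≠ 0) ⊆ (R.filter (fun u => c u ≠ 0)).erase v0 := by
          intro z hzf
          rw [Finset.mem_filter] at hzf
          refine Finset.mem_erase.mpr ⟨?_, Finset.mem_filter.mpr ⟨hzf.1, hzero z hzf.1⟩⟩
          rintro rfl
          exact hzf.2 hc'v0
        have hv0f : v0 ∈ R.filter (fun u => c u ≠ 0) :=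
          Finset.mem_filter.mpr ⟨hv0R, hzero v0 hv0R⟩
        have h1 := Finset.card_le_card hsub
        have h2 : ((R.filter (fun u => c u ≠ 0)).erase v0).card + 1 =
            (R.filter (fun u => c u ≠ 0)).card := Finset.card_erase_add_one hv0f
        omega
      obtain ⟨F, hFR, hFacy, hFmin, hFsum⟩ := ih R c' hmeas hc'
      have hb := density_fvs_bound hclean hnosdc hFR hFacy hFmin
      refine ⟨F, hFR, hFacy, hFmin, ?_⟩
      have hsplitF : ∑ u ∈ F, c u =
          ∑ u ∈ F, c' u + lam * ∑ u ∈ F, ((degIn G R u : ℝ) - 1) := by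
        have h0 : ∀ u ∈ F, c u = c' u + lam * ((degIn G R u : ℝ) - 1) := by
          intro u hu
          rw [hc'def]
          dsimp only
          rw [if_pos (hFR hu)]
          ring
        rw [Finset.sum_congr rfl h0, Finset.sum_add_distrib, ← Finset.mul_sum]
      have hsplitR : ∑ u ∈ R, c u * x u =
          ∑ u ∈ R, c' u * x u + lam * ∑ u ∈ R, ((degIn G R u : ℝ) - 1) * x u := by
        have h0 : ∀ u ∈ R, c u * x u =
            c' u * x u + lam * (((degIn G R u : ℝ) - 1) * x u) := by
          intro u hu
          rw [hc'def]
          dsimp only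
          rw [if_pos hu]
          ring
        rw [Finset.sum_congr rfl h0, Finset.sum_add_distrib, ← Finset.mul_sum]
      have hbR : ∑ u ∈ F, ((degIn G R u : ℝ) - 1) ≤ 2 * ((edgesIn G R : ℝ) - R.card) := by
        have hcast : ((∑ v ∈ F, degIn G R v : ℕ) : ℝ) + 2 *(R.card : ℝ) ≤
            2 * (edgesIn G R : ℝ) + (F.card : ℝ) := by exact_mod_cast hb
        have hexp : ∑ u ∈ F, ((degIn G R u : ℝ) - 1) =
            ((∑ v ∈ F, degIn G R v : ℕ) : ℝ) - (F.card : ℝ) := by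
          rw [Finset.sum_sub_distrib, Finset.sum_const, nsmul_eq_mul, mul_one]
          push_cast
          ring
        rw [hexp]
        linarith
      have hpwd := hx.2 R
      have hchain : lam * ∑ u ∈ F, ((degIn G R u : ℝ) - 1) ≤
          2 * (lam * ∑ u ∈ R, ((degIn G R u : ℝ) - 1) * x u) := by
        have h1 : lam * ∑ u ∈ F, ((degIn G R u : ℝ) - 1) ≤
            lam * (2 * ((edgesIn G R : ℝ) - R.card)) := mul_le_mul_of_nonneg_left hbR hlam0
        have h2 : lam * (2 * ((edgesIn G R : ℝ) - R.card)) ≤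
            lam * (2 * ∑ u ∈ R, ((degIn G R u : ℝ) - 1) * x u) :=
          mul_le_mul_of_nonneg_left (by linarith) hlam0
        linarith
      rw [hsplitF, hsplitR]
      linarith

end

/-- for every `x ∈ P_WD(G) ∩ P_cycle-cover(G)` there is a feedback vertex
set `F` with `Σ_{u ∈ F} c(u) ≤ 2 Σ_{u ∈ V} c(u) x_u`; hence the integrality gap of
this LP relaxation of FVS is at most `2`. -/
theorem stmt_3 {V : Type*} [Fintype V] (G : SimpleGraph V)
    (c : V → ℝ) (hc : ∀ u, 0 ≤ c u)
    (x : V → ℝ) (hx : PWD G x) (hx2 : PCycleCover G x) :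
    ∃ F : Finset V, IsFVS G F ∧ ∑ u ∈ F, c u ≤ 2 * ∑ u, c u * x u := by
  classical
  obtain ⟨F, hFsub, hFacy, -, hFsum⟩ := main_induction G x hx hx2
    (Finset.univ.card + (Finset.univ.filter (fun u => c u ≠ 0)).card) Finset.univ c
    (le_refl _) hc
  refine ⟨F, ?_, ?_⟩
  · intro v0 cyc hcyc
    let φ : (G.induce {v : V | v ∉ F}) →g res G (Finset.univ \ F) :=
      ⟨Subtype.val, fun {a b} hab =>
        ⟨hab, Finset.mem_sdiff.mpr ⟨Finset.mem_univ _, a.2⟩,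
          Finset.mem_sdiff.mpr ⟨Finset.mem_univ _, b.2⟩⟩⟩
    exact hFacy (cyc.map φ) (hcyc.map (fun a b h => Subtype.ext h))
  · exact hFsum

end FVS
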